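/- Let g(X) ∈ K[X] be a polynomial of degree r ≥ 2 such that the coefficient of the term of degree r − 1 is zero, and let λ, β ∈ K with λ ≠ 0. Then g(X) = g(λX + β) if and only if β = 0 and there exist s ∈ ℕ and h(X) ∈ K[X] such that λ^s = 1 and g(X) = h(X^s). -/

import Mathlib

open Polynomial Finset

lemma aux1 {K : Type*} [Field K] (lam beta : K) (hlam : lam ≠ 0) (n k : ℕ) :
    ((C lam * X + C beta) ^ n).coeff k = lam ^ k * beta ^ (n - k) * (n.choose k : K) := by
  have h : C lam * X + C beta = C lam * (X + C (beta * lam⁻¹)) := by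
    rw [mul_add, ← C_mul]
    field_simp
  rw [h, mul_pow, ← C_pow, coeff_C_mul, coeff_X_add_C_pow]
  rcases le_or_gt k n with hk | hk
  · have hn : n = k + (n - k) := (Nat.add_sub_cancel' hk).symm
    rw [mul_pow, hn, pow_add]
    field_simp
    rw [Nat.add_sub_cancel_left, one_div, mul_right_comm (lam ^ (n - k)), ← mul_pow, mul_inv_cancel₀ hlam, one_pow,
      one_mul]
  · rw [Nat.choose_eq_zero_of_lt hk]
    simp

lemma aux2 {K : Type*} [Field K] (g : Polynomial K) (lam beta : K) (hlam : lam ≠ 0) (k : ℕ) :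
    (g.comp (C lam * X + C beta)).coeff k
      = ∑ n ∈ Finset.range (g.natDegree + 1),
          g.coeff n * (lam ^ k * beta ^ (n - k) * (n.choose k : K)) := by
  conv_lhs => rw [g.as_sum_range_C_mul_X_pow]
  rw [Polynomial.sum_comp, finset_sum_coeff]
  refine Finset.sum_congr rfl fun n _ => ?_
  rw [mul_comp, C_comp, X_pow_comp, coeff_C_mul, aux1 lam beta hlam]

/-- Let `g ∈ K[X]` of degree `r ≥ 2` with vanishing coefficient in degree `r - 1`, and let
`λ, β ∈ K` with `λ ≠ 0`. Then `g(X) = g(λX + β)` iff `β = 0`, `λ` is an `s`-th root of unity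
and `g(X) = h(X^s)` for some `h ∈ K[X]` and `s ∈ ℕ`. -/
theorem stmt_1 {K : Type*} [Field K] [CharZero K] [IsAlgClosed K]
    (g : Polynomial K) (r : ℕ) (hr : 2 ≤ r) (hdeg : g.natDegree = r)
    (hcoeff : g.coeff (r - 1) = 0) (lam beta : K) (hlam : lam ≠ 0) :
    g = g.comp (Polynomial.C lam * Polynomial.X + Polynomial.C beta) ↔
      beta = 0 ∧ ∃ (s : ℕ) (h : Polynomial K), lam ^ s = 1 ∧
        g = h.comp (Polynomial.X ^ s) := by
  have hg0 : g ≠ 0 := fun h => by simp [h] at hdeg; omega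
  have har : g.coeff r ≠ 0 := by
    rw [← hdeg]; exact Polynomial.leadingCoeff_ne_zero.mpr hg0
  constructor
  · intro heq
    -- first: beta = 0
    obtain ⟨m, rfl⟩ : ∃ m, r = m + 2 := ⟨r - 2, by omega⟩
    have hco := congrArg (fun p => p.coeff (m + 1)) heq
    rw [aux2 g lam beta hlam, hdeg] at hco
    rw [show m + 2 - 1 = m + 1 from rfl] at hcoeff
    rw [hcoeff] at hco
    rw [Finset.sum_range_succ, Finset.sum_range_succ] at hco
    have hz : ∀ n ∈ Finset.range (m + 1),
        g.coeff n * (lam ^ (m+1) * beta ^ (n - (m+1)) * ((n.choose (m+1) : K))) = 0 := by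
      intro n hn
      rw [Nat.choose_eq_zero_of_lt (Finset.mem_range.mp hn)]
      simp
    rw [Finset.sum_eq_zero hz, hcoeff] at hco
    simp only [Nat.choose_self, Nat.sub_self, pow_zero, Nat.cast_one, mul_one, zero_mul,
      zero_add] at hco
    have hch : ((m+2).choose (m+1) : K) = (m+2 : K) := by
      rw [Nat.choose_succ_self_right]
      push_cast; ring
    rw [show m + 2 - (m + 1) = 1 by omega, pow_one, hch] at hco
    have hbeta : beta = 0 := by
      have h2 : (m + 2 : K) ≠ 0 := by
        have := Nat.cast_ne_zero (R := K) (n := m + 2) |>.mpr (by omega)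
        push_cast at this
        exact this
      have heq0 := hco.symm
      simpa [mul_eq_zero, har, pow_ne_zero _ hlam, hlam, h2] using heq0
    refine ⟨hbeta, ?_⟩
    subst hbeta
    -- now g = g.comp (C lam * X)
    have hmul : ∀ k, g.coeff k = g.coeff k * lam ^ k := by
      intro k
      have hck := congrArg (fun p => p.coeff k) heq
      rw [aux2 g lam 0 hlam k] at hck
      rcases le_or_gt k g.natDegree with hk | hk
      · rw [Finset.sum_eq_single k] at hck
        · rw [Nat.sub_self, pow_zero, Nat.choose_self, Nat.cast_one, mul_one, mul_one] at hck
          exact hck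
        · intro n _ hn
          rcases lt_or_gt_of_ne hn with h | h
          · rw [Nat.choose_eq_zero_of_lt h]; simp
          · rw [zero_pow (by omega : n - k ≠ 0)]; ring
        · intro h
          exact absurd (Finset.mem_range.mpr (by omega)) h
      · rw [Polynomial.coeff_eq_zero_of_natDegree_lt hk]
        ring
    have hlamr : lam ^ (m + 2) = 1 := by
      have := hmul (m + 2)
      have h2 : g.coeff (m+2) * lam ^ (m+2) = g.coeff (m+2) * 1 := by
        rw [mul_one, ← this]
      exact mul_left_cancel₀ har h2
    have hfin : IsOfFinOrder lam := by
      refine isOfFinOrder_iff_pow_eq_one.mpr ⟨m + 2, by omega, hlamr⟩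
    set s := orderOf lam with hs
    have hs0 : s ≠ 0 := hfin.orderOf_pos.ne'
    have hdvd : ∀ n, ¬ s ∣ n → g.coeff n = 0 := by
      intro n hn
      by_contra hcn
      have h2 : g.coeff n * lam ^ n = g.coeff n * 1 := by rw [mul_one, ← hmul n]
      exact hn (orderOf_dvd_of_pow_eq_one (mul_left_cancel₀ hcn h2))
    refine ⟨s, Polynomial.contract s g, pow_orderOf_eq_one lam, ?_⟩
    have : (Polynomial.contract s g).comp (X ^ s) = Polynomial.expand K s (Polynomial.contract s g) :=
      (Polynomial.expand_eq_comp_X_pow s (f := Polynomial.contract s g)).symm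
    rw [this]
    ext n
    rw [Polynomial.coeff_expand (Nat.pos_of_ne_zero hs0), Polynomial.coeff_contract hs0]
    split_ifs with h
    · rw [Nat.div_mul_cancel h]
    · exact hdvd n h
  · rintro ⟨rfl, s, h, hls, rfl⟩
    rw [map_zero, add_zero, Polynomial.comp_assoc, X_pow_comp, mul_pow, ← C_pow, hls, map_one,
      one_mul]
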